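/- Let a = a_1∘⋯∘a_m and b = b_1∘⋯∘b_n ∈ X* be complete blocks such that neither a nor b contains any left invertible letters. Then GP[a] ⊆ GP[b] if and only if s(b) ⊆ s(a) and, after relabelling the letters of a so that s(a_i) = s(b_i) for 1 ≤ i ≤ n, we have GP[a_i] ⊆ GP[b_i] for each 1 ≤ i ≤ n. -/

import Mathlib

/-! Common definitions for graph products of monoids. -/

variable {V : Type*}

/-- A letter of the graph product alphabet: an element of one of the vertex monoids,
tagged by its vertex (its *support*). -/
abbrev GPLetter (M : V → Type*) : Type _ := (α : V) × M α

/-- The defining relations of the graph product: identity letters are trivial,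
letters from the same vertex monoid multiply, and letters at adjacent vertices commute. -/
def gpRel (G : SimpleGraph V) (M : V → Type*) [∀ α, Monoid (M α)] :
    FreeMonoid (GPLetter M) → FreeMonoid (GPLetter M) → Prop := fun w₁ w₂ =>
  (∃ α : V, w₁ = FreeMonoid.of (⟨α, (1 : M α)⟩ : GPLetter M) ∧ w₂ = 1) ∨
  (∃ (α : V) (x y : M α),
      w₁ = FreeMonoid.of (⟨α, x⟩ : GPLetter M) * FreeMonoid.of (⟨α, y⟩ : GPLetter M) ∧
      w₂ = FreeMonoid.of (⟨α, x * y⟩ : GPLetter M)) ∨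
  (∃ (α β : V) (x : M α) (y : M β), G.Adj α β ∧
      w₁ = FreeMonoid.of (⟨α, x⟩ : GPLetter M) * FreeMonoid.of (⟨β, y⟩ : GPLetter M) ∧
      w₂ = FreeMonoid.of (⟨β, y⟩ : GPLetter M) * FreeMonoid.of (⟨α, x⟩ : GPLetter M))

/-- The congruence on the free monoid generated by the graph product relations. -/
def gpCon (G : SimpleGraph V) (M : V → Type*) [∀ α, Monoid (M α)] :
    Con (FreeMonoid (GPLetter M)) := conGen (gpRel G M)

/-- The graph product of the monoids `M α` with respect to the graph `G`. -/
abbrev GraphProduct (G : SimpleGraph V) (M : V → Type*) [∀ α, Monoid (M α)] :=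
  (gpCon G M).Quotient

/-- The class `[w]` in the graph product of a word `w` (given as a list of letters). -/
def gpMk (G : SimpleGraph V) (M : V → Type*) [∀ α, Monoid (M α)]
    (l : List (GPLetter M)) : GraphProduct G M :=
  (gpCon G M).mk' (FreeMonoid.ofList l)

/-- A word is reduced: no letter is an identity, and between any two letters with the
same support there is a letter whose support is not adjacent to it. -/
def GPReduced (G : SimpleGraph V) (M : V → Type*) [∀ α, Monoid (M α)]
    (l : List (GPLetter M)) : Prop :=
  (∀ x ∈ l, x.2 ≠ 1) ∧
    ∀ i j : Fin l.length, i < j → (l.get i).1 = (l.get j).1 →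
      ∃ k : Fin l.length, i < k ∧ k < j ∧ ¬ G.Adj (l.get i).1 (l.get k).1

/-- One shuffle: transpose an adjacent pair of letters whose supports are adjacent in `G`. -/
def ShuffleStep (G : SimpleGraph V) (M : V → Type*)
    (l₁ l₂ : List (GPLetter M)) : Prop :=
  ∃ (u v : List (GPLetter M)) (x y : GPLetter M),
    G.Adj x.1 y.1 ∧ l₁ = u ++ x :: y :: v ∧ l₂ = u ++ y :: x :: v

/-- Two words are shuffle equivalent if one is obtained from the other by a finite
sequence of shuffles. -/
def ShuffleEquiv (G : SimpleGraph V) (M : V → Type*) :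
    List (GPLetter M) → List (GPLetter M) → Prop :=
  Relation.ReflTransGen (ShuffleStep G M)

/-- A letter is left invertible if it is left invertible in its vertex monoid. -/
def LeftInvertibleLetter (M : V → Type*) [∀ α, Monoid (M α)] (x : GPLetter M) : Prop :=
  ∃ y : M x.1, y * x.2 = 1

/-- The set of supports of the letters of a word. -/
def suppSet (M : V → Type*) (l : List (GPLetter M)) : Set V := {α | ∃ x ∈ l, x.1 = α}

/-- A complete block: a reduced word whose support induces a complete subgraph of `G`. -/
def CompleteBlock (G : SimpleGraph V) (M : V → Type*) [∀ α, Monoid (M α)]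
    (l : List (GPLetter M)) : Prop :=
  GPReduced G M l ∧ ∀ x ∈ l, ∀ y ∈ l, x.1 ≠ y.1 → G.Adj x.1 y.1

/-- A list of blocks is a left Foata normal form: the concatenation is reduced, each
block is nonempty with complete support, and each letter of a block fails to be
adjacent to some letter of the preceding block. -/
def LeftFoataForm (G : SimpleGraph V) (M : V → Type*) [∀ α, Monoid (M α)]
    (blocks : List (List (GPLetter M))) : Prop :=
  GPReduced G M blocks.flatten ∧
  (∀ b ∈ blocks, b ≠ [] ∧ ∀ x ∈ b, ∀ y ∈ b, x.1 ≠ y.1 → G.Adj x.1 y.1) ∧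
  List.Chain' (fun b₁ b₂ => ∀ y ∈ b₂, ∃ x ∈ b₁, ¬ G.Adj x.1 y.1) blocks

/-- The principal left ideal `S a = {s * a : s ∈ S}` of a monoid. -/
def plIdeal {S : Type*} [Monoid S] (a : S) : Set S := Set.range (· * a)

/-- The ascending chain condition on principal left ideals. -/
def ACCPL (S : Type*) [Monoid S] : Prop :=
  ∀ a : ℕ → S, (∀ n, plIdeal (a n) ⊆ plIdeal (a (n + 1))) →
    ∃ n, ∀ k, plIdeal (a (n + k)) = plIdeal (a n)

/-- `A` is a left ideal of the monoid `S`. -/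
def IsLeftIdeal {S : Type*} [Monoid S] (A : Set S) : Prop :=
  A.Nonempty ∧ ∀ s : S, ∀ a ∈ A, s * a ∈ A

/-- `A` is generated, as a left ideal, by a finite subset of itself. -/
def IsFGLeftIdeal {S : Type*} [Monoid S] (A : Set S) : Prop :=
  ∃ F : Finset S, ↑F ⊆ A ∧ A = {x | ∃ s : S, ∃ a ∈ F, x = s * a}

/-- A monoid is weakly left noetherian if every left ideal is finitely generated. -/
def WeaklyLeftNoetherian (S : Type*) [Monoid S] : Prop :=
  ∀ A : Set S, IsLeftIdeal A → IsFGLeftIdeal A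

/-- A monoid is left ideal Howson if the intersection of any two principal left ideals
is empty or finitely generated. -/
def LeftIdealHowson (S : Type*) [Monoid S] : Prop :=
  ∀ a b : S, plIdeal a ∩ plIdeal b = ∅ ∨ IsFGLeftIdeal (plIdeal a ∩ plIdeal b)

/-- An LCM monoid: intersections of principal left ideals are empty or principal. -/
def LCMMonoid (S : Type*) [Monoid S] : Prop :=
  ∀ a b : S, plIdeal a ∩ plIdeal b = ∅ ∨ ∃ c : S, plIdeal a ∩ plIdeal b = plIdeal c

/-- A left congruence on a monoid. -/
def IsLeftCongruence {S : Type*} [Monoid S] (ρ : S → S → Prop) : Prop :=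
  Equivalence ρ ∧ ∀ u s t : S, ρ s t → ρ (u * s) (u * t)

/-- The least left congruence containing a set of pairs. -/
def leftConGen {S : Type*} [Monoid S] (R : Set (S × S)) : S → S → Prop := fun s t =>
  ∀ ρ : S → S → Prop, IsLeftCongruence ρ → (∀ p ∈ R, ρ p.1 p.2) → ρ s t

/-- A monoid is finitely left equated if every left annihilator `l(a)` is the left
congruence generated by a finite set. -/
def FinitelyLeftEquated (S : Type*) [Monoid S] : Prop :=
  ∀ a : S, ∃ R : Set (S × S), R.Finite ∧ ∀ s t : S, s * a = t * a ↔ leftConGen R s t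

/-- A monoid is a group: every element has a two-sided inverse. -/
def IsGroupMonoid (S : Type*) [Monoid S] : Prop :=
  ∀ a : S, ∃ b : S, a * b = 1 ∧ b * a = 1

/-- Weakly left coherent: left ideal Howson and finitely left equated. -/
def WeaklyLeftCoherent (S : Type*) [Monoid S] : Prop :=
  LeftIdealHowson S ∧ FinitelyLeftEquated S

/-- The restricted direct product of a family of monoids: elements of the direct
product with only finitely many non-identity coordinates. -/
def restrictedDirectProduct {ι : Type*} (M : ι → Type*) [∀ i, Monoid (M i)] :
    Submonoid (∀ i, M i) where
  carrier := {f | {i | f i ≠ 1}.Finite}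
  one_mem' := by simp
  mul_mem' := by
    intro f g hf hg
    refine Set.Finite.subset (hf.union hg) ?_
    intro i hi
    rw [Set.mem_union]
    by_contra h
    push_neg at h
    obtain ⟨h1, h2⟩ := h
    simp only [Set.mem_setOf_eq, not_not] at h1 h2
    apply hi
    show f i * g i = 1
    rw [h1, h2, one_mul]

/-- Condition (i) for relative completeness: both monoids have two elements, at least
one is not a group, and both vertices are adjacent to every other vertex. -/
def RCcondI (G : SimpleGraph V) (M : V → Type*) [∀ α, Monoid (M α)]
    (α β : V) : Prop :=
  Nat.card (M α) = 2 ∧ Nat.card (M β) = 2 ∧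
  (¬ IsGroupMonoid (M α) ∨ ¬ IsGroupMonoid (M β)) ∧
  ∀ γ : V, γ ≠ α → γ ≠ β → G.Adj α γ ∧ G.Adj β γ

/-- `G` is relatively complete with respect to the family `M` of vertex monoids. -/
def RelativelyComplete (G : SimpleGraph V) (M : V → Type*)
    [∀ α, Monoid (M α)] : Prop :=
  (∀ α β : V, α ≠ β → ¬ G.Adj α β →
      RCcondI G M α β ∨ (IsGroupMonoid (M α) ∧ IsGroupMonoid (M β))) ∧
  ∀ α β α' β' : V, α ≠ β → ¬ G.Adj α β → RCcondI G M α β →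
    α' ≠ β' → ¬ G.Adj α' β' → RCcondI G M α' β' →
    (α = α' ∧ β = β') ∨ (α = β' ∧ β = α')

set_option linter.unusedSectionVars false
section Aux
variable {V : Type*} (G : SimpleGraph V) (M : V → Type*) [∀ α, Monoid (M α)]

theorem plIdeal_subset_iff {S : Type*} [Monoid S] {a b : S} :
    plIdeal a ⊆ plIdeal b ↔ ∃ g, g * b = a := by
  constructor
  · intro h; exact h ⟨1, one_mul a⟩
  · rintro ⟨g, rfl⟩ z ⟨s, rfl⟩; exact ⟨s * g, by simp [mul_assoc]⟩

theorem gpMk_append (l₁ l₂ : List (GPLetter M)) :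
    gpMk G M (l₁ ++ l₂) = gpMk G M l₁ * gpMk G M l₂ := by
  unfold gpMk
  rw [show FreeMonoid.ofList (l₁ ++ l₂) = FreeMonoid.ofList l₁ * FreeMonoid.ofList l₂ from rfl,
    map_mul]

theorem gpMk_nil : gpMk G M [] = 1 := by
  unfold gpMk
  rw [show (FreeMonoid.ofList ([] : List (GPLetter M))) = 1 from rfl, map_one]

theorem gpMk_cons (x : GPLetter M) (l : List (GPLetter M)) :
    gpMk G M (x :: l) = gpMk G M [x] * gpMk G M l := gpMk_append G M [x] l

theorem gpMk_of_rel {w₁ w₂ : FreeMonoid (GPLetter M)} (h : gpRel G M w₁ w₂) :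
    (gpCon G M).mk' w₁ = (gpCon G M).mk' w₂ :=
  (Con.eq _).mpr (ConGen.Rel.of _ _ h)

theorem gpMk_single_mul (α : V) (x y : M α) :
    gpMk G M [⟨α, x * y⟩] = gpMk G M [⟨α, x⟩] * gpMk G M [⟨α, y⟩] := by
  have := gpMk_of_rel G M (w₁ := FreeMonoid.of (⟨α, x⟩ : GPLetter M) *
      FreeMonoid.of (⟨α, y⟩ : GPLetter M)) (w₂ := FreeMonoid.of (⟨α, x * y⟩ : GPLetter M))
    (Or.inr (Or.inl ⟨α, x, y, rfl, rfl⟩))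
  rw [map_mul] at this
  exact this.symm

theorem gpMk_comm' {x y : GPLetter M} (h : G.Adj x.1 y.1) :
    gpMk G M [x] * gpMk G M [y] = gpMk G M [y] * gpMk G M [x] := by
  have := gpMk_of_rel G M (w₁ := FreeMonoid.of x * FreeMonoid.of y)
    (w₂ := FreeMonoid.of y * FreeMonoid.of x)
    (Or.inr (Or.inr ⟨x.1, y.1, x.2, y.2, h, rfl, rfl⟩))
  rw [map_mul, map_mul] at this
  exact this

open Classical in
noncomputable def gpLetterProj (α : V) (x : GPLetter M) : M α :=
  if h : x.1 = α then h ▸ x.2 else 1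

theorem gpLetterProj_neg {α : V} {x : GPLetter M} (h : x.1 ≠ α) :
    gpLetterProj M α x = 1 := dif_neg h

theorem gpLetterProj_self (x : GPLetter M) : gpLetterProj M x.1 x = x.2 := dif_pos rfl

theorem gpLetterProj_cast {α : V} (x : GPLetter M) (h : x.1 = α) :
    (⟨α, gpLetterProj M α x⟩ : GPLetter M) = x := by
  subst h; rw [gpLetterProj_self]

noncomputable def gpProj (α : V) : GraphProduct G M →* M α :=
  Con.lift _ (FreeMonoid.lift (gpLetterProj M α)) (by
    rw [gpCon]
    refine Con.conGen_le.mpr fun w₁ w₂ h => ?_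
    rcases h with (⟨β, rfl, rfl⟩ | ⟨β, x, y, rfl, rfl⟩ | ⟨β, γ, x, y, hadj, rfl, rfl⟩) <;>
      refine (Con.ker_rel _).mpr ?_ <;>
      simp only [map_mul, map_one, FreeMonoid.lift_eval_of]
    · by_cases h : β = α
      · subst h; exact gpLetterProj_self M (⟨β, 1⟩ : GPLetter M)
      · exact gpLetterProj_neg M h
    · by_cases h : β = α
      · subst h
        rw [gpLetterProj_self M (⟨β, x⟩ : GPLetter M),
          gpLetterProj_self M (⟨β, y⟩ : GPLetter M),
          gpLetterProj_self M (⟨β, x * y⟩ : GPLetter M)]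
      · rw [gpLetterProj_neg M h, gpLetterProj_neg M h, gpLetterProj_neg M h, one_mul]
    · have hne : β ≠ γ := hadj.ne
      by_cases h : β = α
      · rw [gpLetterProj_neg M (show (⟨γ, y⟩ : GPLetter M).1 ≠ α from h ▸ hne.symm),
          one_mul, mul_one]
      · rw [gpLetterProj_neg M h, one_mul, mul_one])

theorem gpProj_gpMk (α : V) (l : List (GPLetter M)) :
    gpProj G M α (gpMk G M l) = (l.map (gpLetterProj M α)).prod := by
  unfold gpProj gpMk
  rw [Con.lift_mk', FreeMonoid.lift_ofList]

theorem gpProj_gpMk_single (α : V) (x : GPLetter M) :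
    gpProj G M α (gpMk G M [x]) = gpLetterProj M α x := by
  rw [gpProj_gpMk]; simp

theorem gpProj_split {α : V} (u v : List (GPLetter M)) (x : GPLetter M)
    (hu : ∀ w ∈ u, w.1 ≠ α) (hv : ∀ w ∈ v, w.1 ≠ α) :
    gpProj G M α (gpMk G M (u ++ x :: v)) = gpLetterProj M α x := by
  rw [gpProj_gpMk]
  rw [List.map_append, List.prod_append, List.map_cons, List.prod_cons]
  rw [List.prod_eq_one (by
      intro t ht; obtain ⟨w, hw, rfl⟩ := List.mem_map.mp ht
      exact gpLetterProj_neg M (hu w hw)),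
    List.prod_eq_one (by
      intro t ht; obtain ⟨w, hw, rfl⟩ := List.mem_map.mp ht
      exact gpLetterProj_neg M (hv w hw)),
    one_mul, mul_one]

theorem exists_split {l : List (GPLetter M)}
    (hne : l.Pairwise fun x y => x.1 ≠ y.1) {x : GPLetter M} (hx : x ∈ l) :
    ∃ u v, l = u ++ x :: v ∧ (∀ w ∈ u, w.1 ≠ x.1) ∧ (∀ w ∈ v, w.1 ≠ x.1) := by
  obtain ⟨u, v, rfl⟩ := List.append_of_mem hx
  rw [List.pairwise_append] at hne
  obtain ⟨h1, h2, h12⟩ := hne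
  rw [List.pairwise_cons] at h2
  exact ⟨u, v, rfl, fun w hw => h12 w hw x (List.mem_cons_self),
    fun w hw => (h2.1 w hw).symm⟩

theorem cb_pairwise_ne {l : List (GPLetter M)} (h : CompleteBlock G M l) :
    l.Pairwise fun x y => x.1 ≠ y.1 := by
  rw [List.pairwise_iff_get]
  obtain ⟨⟨_, hred⟩, hcomp⟩ := h
  have key : ∀ d : ℕ, ∀ i j : Fin l.length, i < j → j.1 - i.1 ≤ d →
      (l.get i).1 ≠ (l.get j).1 := by
    intro d
    induction d with
    | zero => intro i j hij hle; rw [Fin.lt_def] at hij; omega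
    | succ d ih =>
      intro i j hij hle heq
      obtain ⟨k, hik, hkj, hnadj⟩ := hred i j hij heq
      have hk : (l.get k).1 = (l.get i).1 := by
        by_contra hne
        exact hnadj (hcomp _ (l.get_mem i) _ (l.get_mem k) fun h' => hne h'.symm)
      rw [Fin.lt_def] at hik hkj hij
      exact ih i k (Fin.lt_def.mpr hik) (by omega) hk.symm
  exact fun i j hij => key (j.1 - i.1) i j hij le_rfl

theorem cb_pairwise_adj {l : List (GPLetter M)} (h : CompleteBlock G M l) :
    l.Pairwise fun x y => G.Adj x.1 y.1 := by
  refine (cb_pairwise_ne G M h).imp_of_mem ?_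
  intro x y hx hy hne
  exact h.2 x hx y hy hne

theorem ne_get_of_pairwise_ne {l : List (GPLetter M)}
    (h : l.Pairwise fun x y => x.1 ≠ y.1) {i j : Fin l.length} (hij : i ≠ j) :
    (l.get i).1 ≠ (l.get j).1 := by
  rw [List.pairwise_iff_get] at h
  rcases lt_or_gt_of_ne hij with h' | h'
  · exact h i j h'
  · exact (h j i h').symm

theorem gpMk_perm {l l' : List (GPLetter M)} (h : l.Perm l')
    (hp : l.Pairwise fun x y => G.Adj x.1 y.1) : gpMk G M l = gpMk G M l' := by
  induction h with
  | nil => rfl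
  | cons x h ih =>
    rename_i l₁ l₂
    rw [List.pairwise_cons] at hp
    rw [gpMk_cons G M x l₁, gpMk_cons G M x l₂, ih hp.2]
  | swap x y l =>
    rw [List.pairwise_cons] at hp
    have hadj : G.Adj y.1 x.1 := hp.1 x (List.mem_cons_self)
    rw [gpMk_cons G M y (x :: l), gpMk_cons G M x l, gpMk_cons G M x (y :: l),
      gpMk_cons G M y l, ← mul_assoc, ← mul_assoc, gpMk_comm' G M hadj]
  | trans h₁ h₂ ih₁ ih₂ =>
    rw [ih₁ hp, ih₂ ((h₁.pairwise_iff (fun {u v} h => SimpleGraph.Adj.symm h)).mp hp)]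

theorem gpMk_comm_list {l : List (GPLetter M)} {x : GPLetter M}
    (h : ∀ w ∈ l, G.Adj w.1 x.1) :
    gpMk G M l * gpMk G M [x] = gpMk G M [x] * gpMk G M l := by
  induction l with
  | nil => rw [gpMk_nil, one_mul, mul_one]
  | cons w l ih =>
    rw [gpMk_cons, mul_assoc, ih (fun w' hw' => h w' (List.mem_cons_of_mem _ hw')),
      ← mul_assoc, gpMk_comm' G M (h w (List.mem_cons_self)), mul_assoc, ← gpMk_cons]


theorem forall₂_mem_left {R : GPLetter M → GPLetter M → Prop} :
    ∀ {l₁ l₂ : List (GPLetter M)}, List.Forall₂ R l₁ l₂ → ∀ w ∈ l₁, ∃ x ∈ l₂, R w x := by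
  intro l₁ l₂ h
  induction h with
  | nil => intro w hw; exact absurd hw List.not_mem_nil
  | cons hr _ ih =>
    intro w hw
    rcases List.mem_cons.mp hw with rfl | hw
    · exact ⟨_, List.mem_cons_self, hr⟩
    · obtain ⟨x, hx, hrx⟩ := ih w hw
      exact ⟨x, List.mem_cons_of_mem _ hx, hrx⟩

theorem aux_divides : ∀ (b c : List (GPLetter M)),
    List.Forall₂ (fun x y => ∃ h : M y.1, x = ⟨y.1, h * y.2⟩) c b →
    b.Pairwise (fun x y => G.Adj x.1 y.1) →
    ∃ g, g * gpMk G M b = gpMk G M c := by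
  intro b
  induction b using List.reverseRecOn with
  | nil =>
    intro c h _
    rw [List.forall₂_nil_right_iff] at h
    subst h
    exact ⟨1, by rw [gpMk_nil, mul_one]⟩
  | append_singleton b' y ih =>
    intro c h hp
    have hc' := List.forall₂_take_append c b' [y] h
    have hz := List.forall₂_drop_append c b' [y] h
    rw [List.forall₂_cons_right_iff] at hz
    obtain ⟨z, cz, ⟨h₀, hz0⟩, hznil, hcz⟩ := hz
    rw [List.forall₂_nil_right_iff] at hznil
    subst hznil
    rw [List.pairwise_append] at hp
    obtain ⟨hp1, _, hadj⟩ := hp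
    obtain ⟨g', hg'⟩ := ih (c.take b'.length) hc' hp1
    have hcomm : gpMk G M (c.take b'.length) * gpMk G M [(⟨y.1, h₀⟩ : GPLetter M)] =
        gpMk G M [(⟨y.1, h₀⟩ : GPLetter M)] * gpMk G M (c.take b'.length) := by
      refine gpMk_comm_list G M ?_
      intro w hw
      obtain ⟨x, hx, h1, hwx⟩ := forall₂_mem_left M hc' w hw
      rw [hwx]
      exact hadj x hx y (List.mem_cons_self)
    have hcsplit : c = c.take b'.length ++ [z] := by
      conv_lhs => rw [← List.take_append_drop b'.length c]
      rw [hcz]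
    refine ⟨gpMk G M [(⟨y.1, h₀⟩ : GPLetter M)] * g', ?_⟩
    rw [hcsplit, gpMk_append, gpMk_append, hz0, gpMk_single_mul]
    have hy : gpMk G M [(⟨y.1, y.2⟩ : GPLetter M)] = gpMk G M [y] := rfl
    rw [hy, ← mul_assoc (gpMk G M (c.take b'.length)), hcomm, ← hg',
      mul_assoc (gpMk G M [(⟨y.1, h₀⟩ : GPLetter M)]) g']
    simp only [mul_assoc]

theorem map_get_subperm {α : Type*} (l : List α) (is : List (Fin l.length))
    (h : is.Nodup) : (is.map l.get).Subperm l := by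
  obtain ⟨js, hperm, hsub⟩ := h.subperm (fun i _ => List.mem_finRange i)
  exact ⟨js.map l.get, hperm.map _,
    by simpa [← List.ofFn_eq_map, List.ofFn_get] using hsub.map l.get⟩

end Aux

/-- comparison of principal left ideals of complete blocks with no left
invertible letters. -/
theorem stmt6 {V : Type*} (G : SimpleGraph V) (M : V → Type*) [∀ α, Monoid (M α)]
    (a b : List (GPLetter M))
    (ha : CompleteBlock G M a) (hb : CompleteBlock G M b)
    (hainv : ∀ x ∈ a, ¬ LeftInvertibleLetter M x)
    (hbinv : ∀ x ∈ b, ¬ LeftInvertibleLetter M x) :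
    plIdeal (gpMk G M a) ⊆ plIdeal (gpMk G M b) ↔
      (suppSet M b ⊆ suppSet M a ∧
        ∃ f : Fin b.length → Fin a.length, Function.Injective f ∧
          ∀ i : Fin b.length, (a.get (f i)).1 = (b.get i).1 ∧
            plIdeal (gpMk G M [a.get (f i)]) ⊆ plIdeal (gpMk G M [b.get i])) := by
  have hbne := cb_pairwise_ne G M hb
  have hane := cb_pairwise_ne G M ha
  constructor
  · intro hsub
    obtain ⟨g, hg⟩ := plIdeal_subset_iff.mp hsub
    have hsupp : suppSet M b ⊆ suppSet M a := by
      rintro α ⟨x, hxb, rfl⟩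
      by_contra hxa
      refine hbinv x hxb ⟨gpProj G M x.1 g, ?_⟩
      have h2 : gpProj G M x.1 (gpMk G M b) = x.2 := by
        obtain ⟨u, v, hsplit, hu, hv⟩ := exists_split M hbne hxb
        rw [hsplit, gpProj_split G M u v x hu hv, gpLetterProj_self]
      have h1 : gpProj G M x.1 (gpMk G M a) = 1 := by
        rw [gpProj_gpMk]
        refine List.prod_eq_one ?_
        intro t ht
        obtain ⟨w, hw, rfl⟩ := List.mem_map.mp ht
        exact gpLetterProj_neg M (fun h => hxa ⟨w, hw, h⟩)
      have hpr := congrArg (gpProj G M x.1) hg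
      rw [map_mul, h1, h2] at hpr
      exact hpr
    refine ⟨hsupp, ?_⟩
    have hget : ∀ i : Fin b.length, ∃ j : Fin a.length, (a.get j).1 = (b.get i).1 := by
      intro i
      obtain ⟨w, hw, hw1⟩ := hsupp ⟨b.get i, List.get_mem b i, rfl⟩
      obtain ⟨j, hj⟩ := List.mem_iff_get.mp hw
      exact ⟨j, by rw [hj]; exact hw1⟩
    choose f hf using hget
    refine ⟨f, ?_, fun i => ⟨hf i, ?_⟩⟩
    · intro i i' he
      by_contra hne
      exact ne_get_of_pairwise_ne M hbne hne (by rw [← hf i, ← hf i', he])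
    · have hxy := hf i
      set x := a.get (f i) with hxdef
      set y := b.get i with hydef
      have h2 : gpProj G M y.1 (gpMk G M b) = y.2 := by
        obtain ⟨u, v, hsplit, hu, hv⟩ :=
          exists_split M hbne (show y ∈ b from List.get_mem b i)
        rw [hsplit, gpProj_split G M u v y hu hv, gpLetterProj_self]
      have h1 : gpProj G M y.1 (gpMk G M a) = gpLetterProj M y.1 x := by
        obtain ⟨u, v, hsplit, hu, hv⟩ :=
          exists_split M hane (show x ∈ a from List.get_mem a (f i))
        rw [hsplit, gpProj_split G M u v x
          (fun w hw h => hu w hw (h.trans hxy.symm))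
          (fun w hw h => hv w hw (h.trans hxy.symm))]
      have key : gpProj G M y.1 g * y.2 = gpLetterProj M y.1 x := by
        have hpr := congrArg (gpProj G M y.1) hg
        rw [map_mul, h2, h1] at hpr
        exact hpr
      rw [plIdeal_subset_iff]
      refine ⟨gpMk G M [⟨y.1, gpProj G M y.1 g⟩], ?_⟩
      have hmul : gpMk G M [(⟨y.1, gpProj G M y.1 g⟩ : GPLetter M)] * gpMk G M [y]
          = gpMk G M [(⟨y.1, gpProj G M y.1 g * y.2⟩ : GPLetter M)] :=
        (gpMk_single_mul G M y.1 (gpProj G M y.1 g) y.2).symm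
      rw [hmul, key, gpLetterProj_cast M x hxy]
  · rintro ⟨hsupp, f, hfinj, hf⟩
    rw [plIdeal_subset_iff]
    set c : List (GPLetter M) := List.ofFn (fun i => a.get (f i)) with hc
    have hF : List.Forall₂ (fun x y => ∃ h : M y.1, x = ⟨y.1, h * y.2⟩) c b := by
      rw [List.forall₂_iff_get]
      refine ⟨by simp [hc], ?_⟩
      intro i h1 h2
      have hgetc : c.get ⟨i, h1⟩ = a.get (f ⟨i, h2⟩) := List.get_ofFn _ _
      obtain ⟨hs, hsub1⟩ := hf ⟨i, h2⟩
      obtain ⟨g, hg⟩ := plIdeal_subset_iff.mp hsub1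
      have e1 : gpProj G M (b.get ⟨i, h2⟩).1 (gpMk G M [b.get ⟨i, h2⟩])
          = (b.get ⟨i, h2⟩).2 := by
        rw [gpProj_gpMk_single, gpLetterProj_self]
      have e2 : gpProj G M (b.get ⟨i, h2⟩).1 (gpMk G M [a.get (f ⟨i, h2⟩)])
          = gpLetterProj M (b.get ⟨i, h2⟩).1 (a.get (f ⟨i, h2⟩)) :=
        gpProj_gpMk_single G M _ _
      have hpr := congrArg (gpProj G M (b.get ⟨i, h2⟩).1) hg
      rw [map_mul, e1, e2] at hpr
      refine ⟨gpProj G M (b.get ⟨i, h2⟩).1 g, ?_⟩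
      rw [hgetc, hpr]
      exact (gpLetterProj_cast M _ hs).symm
    have hsubperm : c.Subperm a := by
      have hcomp : (fun i => a.get (f i)) = a.get ∘ f := rfl
      rw [hc, List.ofFn_eq_map, hcomp, ← List.map_map]
      exact map_get_subperm a ((List.finRange b.length).map f)
        ((List.nodup_finRange b.length).map hfinj)
    obtain ⟨l', hl'perm, hl'sub⟩ := hsubperm
    obtain ⟨r, hr⟩ := hl'sub.exists_perm_append
    have haperm : a.Perm (r ++ c) :=
      hr.trans ((hl'perm.append_right r).trans List.perm_append_comm)
    obtain ⟨g, hg⟩ := aux_divides G M b c hF (cb_pairwise_adj G M hb)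
    refine ⟨gpMk G M r * g, ?_⟩
    rw [mul_assoc, hg, ← gpMk_append, ← gpMk_perm G M haperm (cb_pairwise_adj G M ha)]
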